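/- For every R > 0 and every s > 0, the safe-set profiles are finite: H₁(R, s) < ∞ and H₂(R, s) < ∞. -/

import Mathlib

open Filter Topology MeasureTheory Set Metric Bornology RealInnerProductSpace
open scoped ENNReal NNReal

noncomputable section

namespace Bif

abbrev Xs (d : ℕ) : Type := EuclideanSpace ℝ (Fin d)
abbrev Ys (m : ℕ) : Type := EuclideanSpace ℝ (Fin m)
abbrev Zs (m d : ℕ) : Type := WithLp 2 (Ys m × Xs d)

variable {d m n : ℕ}

/-- The point `(y, x)` in `Y × ℝ^d` equipped with the product Euclidean (ℓ²) norm. -/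
def ptYX (y : Ys m) (x : Xs d) : Zs m d := (WithLp.equiv 2 (Ys m × Xs d)).symm (y, x)

def projY (p : Zs m d) : Ys m := ((WithLp.equiv 2 (Ys m × Xs d)) p).1

def projX (p : Zs m d) : Xs d := ((WithLp.equiv 2 (Ys m × Xs d)) p).2

/-- `f` is locally Lipschitz on `s`: every point of `s` has a relative
neighborhood on which `f` is Lipschitz. -/
def LocLipOn {α β : Type*} [PseudoEMetricSpace α] [PseudoEMetricSpace β]
    (s : Set α) (f : α → β) : Prop :=
  ∀ x ∈ s, ∃ C : NNReal, ∃ t ∈ 𝓝[s] x, LipschitzOnWith C f t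

/-- The solution set `F(x) = {f_1(x), …, f_n(x)}`. -/
def Fset (f : Fin n → Xs d → Ys m) (x : Xs d) : Set (Ys m) :=
  Set.range fun i => f i x

/-- The reduced Voronoi switching set `Σ°(x)`. -/
def Sigma0 (f : Fin n → Xs d → Ys m) (x : Xs d) : Set (Ys m) :=
  {y | ∃ i j : Fin n, f i x ≠ f j x ∧ ‖y - f i x‖ = ‖y - f j x‖ ∧
        ∀ k, ‖y - f i x‖ ≤ ‖y - f k x‖}

/-- The graph-closure switching set `Σ̃(x₀)`: the graph of `Σ̃` is the closure of
the graph of `Σ°` (over base points in `K`). -/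
def SigmaTilde (K : Set (Xs d)) (f : Fin n → Xs d → Ys m) (x0 : Xs d) : Set (Ys m) :=
  {y | (x0, y) ∈ closure {p : Xs d × Ys m | p.1 ∈ K ∧ p.2 ∈ Sigma0 f p.1}}

/-- `x₀` has a stable collapse pattern: on a relative neighborhood `U ⊆ K` of `x₀`
there is a partition (equivalence relation) of the branch indices such that two
branches agree at a point of `U` iff they lie in the same cluster. -/
def StableAt (K : Set (Xs d)) (f : Fin n → Xs d → Ys m) (x0 : Xs d) : Prop :=
  ∃ U ∈ 𝓝[K] x0, U ⊆ K ∧ ∃ R : Fin n → Fin n → Prop, Equivalence R ∧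
    ∀ x ∈ U, ∀ i j : Fin n, (f i x = f j x ↔ R i j)

/-- The unstable collapse set `𝒰 = K \ S`. -/
def Unstable (K : Set (Xs d)) (f : Fin n → Xs d → Ys m) : Set (Xs d) :=
  {x ∈ K | ¬ StableAt K f x}

/-- `P` is the priority nearest selector: `P y x = f i x` where `i` is the
smallest index minimizing `‖y - f i x‖`. -/
def IsPrioritySelector (f : Fin n → Xs d → Ys m) (P : Ys m → Xs d → Ys m) : Prop :=
  ∀ (y : Ys m) (x : Xs d), ∃ i : Fin n, P y x = f i x ∧
    (∀ j, ‖y - f i x‖ ≤ ‖y - f j x‖) ∧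
    (∀ j, (∀ k, ‖y - f j x‖ ≤ ‖y - f k x‖) → i ≤ j)

/-- On `closure K \ K`, `f` takes the value of the limit of `f` along `K` when this
limit exists, and `0` otherwise (limit-or-zero extension of the branch maps). -/
def IsLimitExtension (K : Set (Xs d)) (f : Fin n → Xs d → Ys m) : Prop :=
  ∀ i : Fin n, ∀ x ∈ closure K \ K,
    Tendsto (f i) (𝓝[K] x) (𝓝 (f i x)) ∨
    ((¬ ∃ L : Ys m, Tendsto (f i) (𝓝[K] x) (𝓝 L)) ∧ f i x = 0)

/-- `𝒟`: the points of `closure K` at which some (extended) branch fails to be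
locally Lipschitz. -/
def DSet (K : Set (Xs d)) (f : Fin n → Xs d → Ys m) : Set (Xs d) :=
  {x ∈ closure K | ∃ i : Fin n,
    ¬ ∃ C : NNReal, ∃ t ∈ 𝓝[closure K] x, LipschitzOnWith C (f i) t}

/-- The joint bad set `ℬ ⊆ Y × closure K`. -/
def BadSet (K : Set (Xs d)) (f : Fin n → Xs d → Ys m) : Set (Zs m d) :=
  {p | projX p ∈ DSet K f ∪ closure (Unstable K f) ∨ projY p ∈ SigmaTilde K f (projX p)}

/-- `ρ(y, x) = dist((y, x), ℬ)` in the product Euclidean norm. -/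
def rhoB (K : Set (Xs d)) (f : Fin n → Xs d → Ys m) (y : Ys m) (x : Xs d) : ℝ :=
  Metric.infDist (ptYX y x) (BadSet K f)

/-- `ω(y, x) = ρ(y, x) / (1 + ρ(y, x))`. -/
def omegaB (K : Set (Xs d)) (f : Fin n → Xs d → Ys m) (y : Ys m) (x : Xs d) : ℝ :=
  rhoB K f y x / (1 + rhoB K f y x)

/-- The safe tube `𝒮(R, s)`. -/
def STube (K : Set (Xs d)) (f : Fin n → Xs d → Ys m) (R s : ℝ) : Set (Ys m × Xs d) :=
  {q | q.2 ∈ closure K ∧ ‖q.1‖ ≤ R ∧ s ≤ omegaB K f q.1 q.2}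

/-- The set whose supremum is the safe-set profile `H₁(R, s)`. -/
def H1set (K : Set (Xs d)) (f : Fin n → Xs d → Ys m) (P : Ys m → Xs d → Ys m)
    (R s : ℝ) : Set ℝ :=
  {r | ∃ y x z, (y, x) ∈ STube K f R s ∧ (y, z) ∈ STube K f R s ∧ x ≠ z ∧
       r = ‖P y x - P y z‖ / ‖x - z‖}

/-- The set whose supremum is the safe-set profile `H₂(R, s)`. -/
def H2set (K : Set (Xs d)) (f : Fin n → Xs d → Ys m) (P : Ys m → Xs d → Ys m)
    (R s : ℝ) : Set ℝ :=
  {r | ∃ y x, (y, x) ∈ STube K f R s ∧ r = ‖P y x‖}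

def H1 (K : Set (Xs d)) (f : Fin n → Xs d → Ys m) (P : Ys m → Xs d → Ys m) (R s : ℝ) : ℝ :=
  sSup (H1set K f P R s)

def H2 (K : Set (Xs d)) (f : Fin n → Xs d → Ys m) (P : Ys m → Xs d → Ys m) (R s : ℝ) : ℝ :=
  sSup (H2set K f P R s)

/-- `λ_R(s) = 1 / (H₁(R, s) + H₂(R, s) + 1)`. -/
def lamB (K : Set (Xs d)) (f : Fin n → Xs d → Ys m) (P : Ys m → Xs d → Ys m)
    (R s : ℝ) : ℝ :=
  1 / (H1 K f P R s + H2 K f P R s + 1)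

/-- `Θ_R(r) = ∫₀^r λ_R(s) ds`. -/
def ThetaB (K : Set (Xs d)) (f : Fin n → Xs d → Ys m) (P : Ys m → Xs d → Ys m)
    (R r : ℝ) : ℝ :=
  ∫ s in (0:ℝ)..r, lamB K f P R s

/-- The damping factor `η(y, x)`. -/
def etaB (K : Set (Xs d)) (f : Fin n → Xs d → Ys m) (P : Ys m → Xs d → Ys m)
    (y : Ys m) (x : Xs d) : ℝ :=
  ThetaB K f P (1 + ‖y‖) (omegaB K f y x) /
    (1 + ThetaB K f P (1 + ‖y‖) (omegaB K f y x))

/-- The recurrent operator `g(y, x) = (1 − η(y, x)) y + η(y, x) P_y(x)`. -/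
def gB (K : Set (Xs d)) (f : Fin n → Xs d → Ys m) (P : Ys m → Xs d → Ys m)
    (y : Ys m) (x : Xs d) : Ys m :=
  (1 - etaB K f P y x) • y + etaB K f P y x • P y x

/-- Core geometric lemma: if `v i` is a nearest point to `y` among the `v k` and
`v j` is a different point, then there is a "switching point" `y'` (equidistant from two
distinct values, both nearest) with `‖y' - y‖ * (2 * ‖v i - v j‖) ≤ ‖y - v j‖^2 - ‖y - v i‖^2`. -/
lemma core {m n : ℕ} (v : Fin n → Ys m) (y : Ys m) (i j : Fin n)
    (hmin : ∀ k, ‖y - v i‖ ≤ ‖y - v k‖) (hne : v i ≠ v j) :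
    ∃ y' : Ys m,
      (∃ a b, v a ≠ v b ∧ ‖y' - v a‖ = ‖y' - v b‖ ∧ ∀ k, ‖y' - v a‖ ≤ ‖y' - v k‖) ∧
      ‖y' - y‖ * (2 * ‖v i - v j‖) ≤ ‖y - v j‖ ^ 2 - ‖y - v i‖ ^ 2 := by
  set u := v i with hu
  set w := v j with hw
  have hwu : (0:ℝ) < ‖w - u‖ := by
    rw [norm_pos_iff, sub_ne_zero]; exact fun h => hne h.symm
  set σ : ℝ := (‖y - w‖ ^ 2 - ‖y - u‖ ^ 2) / (2 * ‖w - u‖ ^ 2) with hσ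
  have hσ0 : 0 ≤ σ := by
    apply div_nonneg
    · nlinarith [hmin j, norm_nonneg (y - u), norm_nonneg (y - w)]
    · positivity
  set yt : ℝ → Ys m := fun t => y + (t * σ) • (w - u) with hyt
  -- squared distances along the line
  have hsq : ∀ t : ℝ, ∀ z : Ys m, ‖yt t - z‖ ^ 2
      = ‖y - z‖ ^ 2 + 2 * (t * σ) * ⟪y - z, w - u⟫ + (t * σ) ^ 2 * ‖w - u‖ ^ 2 := by
    intro t z
    have : yt t - z = (y - z) + (t * σ) • (w - u) := by
      simp [hyt]; abel
    rw [this, @norm_add_sq_real, real_inner_smul_right, norm_smul]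
    simp [mul_pow]
    ring
  have hkey : ∀ t : ℝ, ‖yt t - u‖ ^ 2 - ‖yt t - w‖ ^ 2
      = ‖y - u‖ ^ 2 - ‖y - w‖ ^ 2 + 2 * (t * σ) * ‖w - u‖ ^ 2 := by
    intro t
    rw [hsq t u, hsq t w]
    have : ⟪y - u, w - u⟫ - ⟪y - w, w - u⟫ = ‖w - u‖ ^ 2 := by
      rw [← inner_sub_left]
      have : (y - u) - (y - w) = w - u := by abel
      rw [this, real_inner_self_eq_norm_sq]
    linear_combination (2 * (t * σ)) * this
  have hequi : ‖yt 1 - u‖ = ‖yt 1 - w‖ := by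
    have h2 : ‖yt 1 - u‖ ^ 2 = ‖yt 1 - w‖ ^ 2 := by
      have h := hkey 1
      have hσval : 2 * (1 * σ) * ‖w - u‖ ^ 2 = ‖y - w‖ ^ 2 - ‖y - u‖ ^ 2 := by
        field_simp [hσ]
        rw [hσ, mul_div_assoc', div_mul_eq_mul_div, div_eq_iff (mul_ne_zero two_ne_zero (pow_ne_zero 2 hwu.ne'))]; ring
      linarith
    have := congrArg Real.sqrt h2
    rwa [Real.sqrt_sq (norm_nonneg _), Real.sqrt_sq (norm_nonneg _)] at this
  -- the set of parameters where `u` is still a nearest point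
  have hcont : ∀ z : Ys m, Continuous fun t => ‖yt t - z‖ := by
    intro z
    have : Continuous fun t : ℝ => y + (t * σ) • (w - u) - z := by fun_prop
    exact this.norm
  set A : Set ℝ := {t | t ∈ Icc (0:ℝ) 1 ∧ ∀ k, ‖yt t - u‖ ≤ ‖yt t - v k‖} with hA
  have h0A : (0:ℝ) ∈ A := by
    constructor
    · exact ⟨le_refl 0, zero_le_one⟩
    · intro k
      have h0 : yt 0 = y := by simp [hyt]
      rw [h0]; exact hmin k
  have hAclosed : IsClosed A := by
    have : A = Icc (0:ℝ) 1 ∩ ⋂ k, {t | ‖yt t - u‖ ≤ ‖yt t - v k‖} := by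
      ext t; simp [hA, mem_iInter]
    rw [this]
    exact isClosed_Icc.inter (isClosed_iInter fun k => isClosed_le (hcont u) (hcont (v k)))
  have hAbdd : BddAbove A := ⟨1, fun t ht => ht.1.2⟩
  set t0 : ℝ := sSup A with ht0
  have ht0A : t0 ∈ A := hAclosed.csSup_mem ⟨0, h0A⟩ hAbdd
  have ht01 : t0 ∈ Icc (0:ℝ) 1 := ht0A.1
  have hnorm : ‖yt t0 - y‖ = t0 * σ * ‖w - u‖ := by
    have : yt t0 - y = (t0 * σ) • (w - u) := by simp [hyt]
    rw [this, norm_smul, Real.norm_eq_abs, abs_of_nonneg (mul_nonneg ht01.1 hσ0)]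
  have hbound : ‖yt t0 - y‖ * (2 * ‖v i - v j‖) ≤ ‖y - v j‖ ^ 2 - ‖y - v i‖ ^ 2 := by
    rw [hnorm]
    have huw : ‖v i - v j‖ = ‖w - u‖ := by rw [← hu, ← hw, norm_sub_rev]
    rw [huw]
    have h1 : t0 * σ ≤ σ := by
      nlinarith [ht01.1, ht01.2, hσ0]
    have h2 : σ * ‖w - u‖ * (2 * ‖w - u‖) = ‖y - w‖ ^ 2 - ‖y - u‖ ^ 2 := by
      field_simp [hσ]
      rw [hσ, div_mul_eq_mul_div, div_mul_eq_mul_div, div_eq_iff (mul_ne_zero two_ne_zero (pow_ne_zero 2 hwu.ne'))]; ring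
    calc t0 * σ * ‖w - u‖ * (2 * ‖w - u‖) ≤ σ * ‖w - u‖ * (2 * ‖w - u‖) := by
          nlinarith [hwu, h1]
      _ = ‖y - w‖ ^ 2 - ‖y - u‖ ^ 2 := h2
      _ = ‖y - v j‖ ^ 2 - ‖y - v i‖ ^ 2 := by rw [← hu, ← hw]
  refine ⟨yt t0, ?_, hbound⟩
  rcases eq_or_lt_of_le ht01.2 with h1 | hlt
  · -- t0 = 1 : tie between u and w
    have heq : ‖yt t0 - u‖ = ‖yt t0 - w‖ := by rw [h1]; exact hequi
    exact ⟨i, j, hne, heq, ht0A.2⟩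
  · -- t0 < 1 : some other value ties with u
    have hex : ∃ k, v k ≠ u ∧ ‖yt t0 - v k‖ ≤ ‖yt t0 - u‖ := by
      by_contra hcon
      push_neg at hcon
      -- eventually near t0 all distinct values are strictly farther
      have hev : ∀ᶠ t in 𝓝 t0, ∀ k, v k ≠ u → ‖yt t - u‖ < ‖yt t - v k‖ := by
        rw [eventually_all]
        intro k
        by_cases hk : v k = u
        · exact Eventually.of_forall fun t h => absurd hk h
        · have hopen : IsOpen {t | ‖yt t - u‖ < ‖yt t - v k‖} :=
            isOpen_lt (hcont u) (hcont (v k))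
          have hmem : t0 ∈ {t | ‖yt t - u‖ < ‖yt t - v k‖} := hcon k hk
          filter_upwards [hopen.mem_nhds hmem] with t ht hne'
          exact ht
      have hev2 : ∀ᶠ t in 𝓝 t0, t < 1 := Filter.Tendsto.eventually_lt_const hlt tendsto_id
      have : ∀ᶠ t in 𝓝[>] t0, (∀ k, v k ≠ u → ‖yt t - u‖ < ‖yt t - v k‖) ∧ t < 1 :=
        eventually_nhdsWithin_of_eventually_nhds (hev.and hev2)
      obtain ⟨t1, ht1, ht1gt⟩ := (this.and self_mem_nhdsWithin).exists
      have ht1A : t1 ∈ A := by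
        refine ⟨⟨le_trans ht01.1 (le_of_lt ht1gt), le_of_lt ht1.2⟩, fun k => ?_⟩
        by_cases hk : v k = u
        · rw [hk]
        · exact (ht1.1 k hk).le
      exact absurd (le_csSup hAbdd ht1A) (not_le.mpr ht1gt)
    obtain ⟨k, hk, hkle⟩ := hex
    have hmin0 : ∀ k', ‖yt t0 - u‖ ≤ ‖yt t0 - v k'‖ := ht0A.2
    have heq : ‖yt t0 - u‖ = ‖yt t0 - v k‖ := le_antisymm (hmin0 k) hkle
    exact ⟨i, k, fun h => hk ((h.symm).trans hu.symm), heq, hmin0⟩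

/-- Pointwise bound: if no "switching point" lies within distance `c` of `y`,
then any two branch values are quantitatively close in terms of their distances to `y`. -/
lemma pointB {m n : ℕ} (v : Fin n → Ys m) (y : Ys m) (c : ℝ) (hc : 0 < c)
    (h : ∀ y' : Ys m,
      (∃ a b, v a ≠ v b ∧ ‖y' - v a‖ = ‖y' - v b‖ ∧ ∀ k, ‖y' - v a‖ ≤ ‖y' - v k‖) →
      c ≤ ‖y' - y‖)
    (a : Fin n) (ha : ∀ k, ‖y - v a‖ ≤ ‖y - v k‖) (i j : Fin n) :
    ‖v i - v j‖ * (2 * c) ≤ (‖y - v i‖ ^ 2 - ‖y - v a‖ ^ 2) + (‖y - v j‖ ^ 2 - ‖y - v a‖ ^ 2) := by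
  have key : ∀ k, ‖v a - v k‖ * (2 * c) ≤ ‖y - v k‖ ^ 2 - ‖y - v a‖ ^ 2 := by
    intro k
    by_cases hvk : v a = v k
    · rw [← hvk]; simp
    · obtain ⟨y', hy', hb⟩ := core v y a k ha hvk
      have hcy : c ≤ ‖y' - y‖ := h y' hy'
      have hpos : (0:ℝ) < ‖v a - v k‖ := by
        rw [norm_pos_iff, sub_ne_zero]; exact hvk
      nlinarith [hb, hcy, hpos]
  have tri : ‖v i - v j‖ ≤ ‖v a - v i‖ + ‖v a - v j‖ := by
    calc ‖v i - v j‖ = ‖(v i - v a) + (v a - v j)‖ := by abel_nf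
      _ ≤ ‖v i - v a‖ + ‖v a - v j‖ := norm_add_le _ _
      _ = ‖v a - v i‖ + ‖v a - v j‖ := by rw [norm_sub_rev (v i)]
  nlinarith [key i, key j, tri, hc]


lemma pointC {d m n : ℕ} (K : Set (Xs d)) (f : Fin n → Xs d → Ys m)
    (x : Xs d) (hx : x ∈ closure K)
    (hcont : ∀ k, Tendsto (f k) (𝓝[K] x) (𝓝 (f k x)))
    (y : Ys m) (c : ℝ) (hc : 0 < c)
    (hB : ∀ x' ∈ K, ∀ y' ∈ Sigma0 f x', c ^ 2 ≤ ‖y' - y‖ ^ 2 + ‖x' - x‖ ^ 2)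
    (a : Fin n) (ha : ∀ k, ‖y - f a x‖ ≤ ‖y - f k x‖) (i j : Fin n) :
    ‖f i x - f j x‖ * (2 * c) ≤
      (‖y - f i x‖ ^ 2 - ‖y - f a x‖ ^ 2) + (‖y - f j x‖ ^ 2 - ‖y - f a x‖ ^ 2) := by
  haveI hne : (𝓝[K] x).NeBot := mem_closure_iff_nhdsWithin_neBot.mp hx
  haveI : Nonempty (Fin n) := ⟨a⟩
  set l := 𝓝[K] x with hl
  set D := ‖y - f a x‖ with hD
  set δ : Xs d → ℝ := fun x' => ∑ k, ‖f k x' - f k x‖ with hδ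
  have hδk : ∀ (k : Fin n) (x' : Xs d), ‖f k x' - f k x‖ ≤ δ x' := by
    intro k x'
    exact Finset.single_le_sum (f := fun k => ‖f k x' - f k x‖)
      (fun k _ => norm_nonneg _) (Finset.mem_univ k)
  have hδ0 : Tendsto δ l (𝓝 0) := by
    have : Tendsto δ l (𝓝 (∑ k : Fin n, (0:ℝ))) := by
      apply tendsto_finset_sum
      intro k _
      have := ((hcont k).sub_const (f k x)).norm
      simpa using this
    simpa using this
  have hid : Tendsto (fun x' : Xs d => x') l (𝓝 x) := tendsto_id.mono_right nhdsWithin_le_nhds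
  have hxx' : Tendsto (fun x' : Xs d => ‖x' - x‖) l (𝓝 0) := by
    have := (hid.sub_const x).norm
    simpa using this
  set cf : Xs d → ℝ := fun x' => Real.sqrt (c ^ 2 - ‖x' - x‖ ^ 2) with hcf0
  have hcf : Tendsto cf l (𝓝 c) := by
    have hin : Tendsto (fun x' : Xs d => c ^ 2 - ‖x' - x‖ ^ 2) l (𝓝 (c ^ 2)) := by
      have := (tendsto_const_nhds (x := (c^2 : ℝ)) (f := l)).sub (hxx'.pow 2)
      simpa using this
    have := (Real.continuous_sqrt.tendsto (c ^ 2)).comp hin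
    simpa [Real.sqrt_sq hc.le, Function.comp_def, hcf0] using this
  have hev : ∀ᶠ x' in l, ‖f i x' - f j x'‖ * (2 * cf x') ≤
      (‖y - f i x'‖ ^ 2 - (max 0 (D - δ x')) ^ 2) +
      (‖y - f j x'‖ ^ 2 - (max 0 (D - δ x')) ^ 2) := by
    have h1 : ∀ᶠ x' in l, x' ∈ K := eventually_mem_nhdsWithin
    have h2 : ∀ᶠ x' in l, ‖x' - x‖ < c := by
      have hball : ∀ᶠ x' in 𝓝 x, ‖x' - x‖ < c := by
        filter_upwards [Metric.ball_mem_nhds x hc] with x' hx'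
        rwa [Metric.mem_ball, dist_eq_norm] at hx'
      exact hball.filter_mono nhdsWithin_le_nhds
    filter_upwards [h1, h2] with x' hK' hlt
    have hc' : 0 < cf x' := Real.sqrt_pos.mpr (by nlinarith [norm_nonneg (x' - x)])
    have hsqc : cf x' ^ 2 = c ^ 2 - ‖x' - x‖ ^ 2 :=
      Real.sq_sqrt (by nlinarith [norm_nonneg (x' - x)])
    obtain ⟨a', ha'⟩ := Finite.exists_min fun k : Fin n => ‖y - f k x'‖
    have hB' : ∀ y' : Ys m,
        (∃ p q, f p x' ≠ f q x' ∧ ‖y' - f p x'‖ = ‖y' - f q x'‖ ∧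
          ∀ k, ‖y' - f p x'‖ ≤ ‖y' - f k x'‖) → cf x' ≤ ‖y' - y‖ := by
      intro y' hy'
      have hs : y' ∈ Sigma0 f x' := hy'
      have hbb := hB x' hK' y' hs
      nlinarith [norm_nonneg (y' - y), Real.sqrt_nonneg (c ^ 2 - ‖x' - x‖ ^ 2), hsqc]
    have main := pointB (fun k => f k x') y (cf x') hc' hB' a' ha' i j
    have hda' : max 0 (D - δ x') ≤ ‖y - f a' x'‖ := by
      apply max_le (norm_nonneg _)
      have h3 : D ≤ ‖y - f a' x‖ := ha a'
      have h4 : ‖y - f a' x‖ ≤ ‖y - f a' x'‖ + ‖f a' x' - f a' x‖ := by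
        calc ‖y - f a' x‖ = ‖(y - f a' x') + (f a' x' - f a' x)‖ := by abel_nf
          _ ≤ _ := norm_add_le _ _
      linarith [hδk a' x']
    have hsq2 : (max 0 (D - δ x')) ^ 2 ≤ ‖y - f a' x'‖ ^ 2 :=
      pow_le_pow_left₀ (le_max_left 0 _) hda' 2
    have ha'i : ‖y - f a' x'‖ ≤ ‖y - f i x'‖ := ha' i
    have ha'j : ‖y - f a' x'‖ ≤ ‖y - f j x'‖ := ha' j
    linarith [main]
  have hL : Tendsto (fun x' => ‖f i x' - f j x'‖ * (2 * cf x')) l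
      (𝓝 (‖f i x - f j x‖ * (2 * c))) :=
    (((hcont i).sub (hcont j)).norm).mul (hcf.const_mul 2)
  have hni : Tendsto (fun x' => ‖y - f i x'‖ ^ 2) l (𝓝 (‖y - f i x‖ ^ 2)) :=
    (((tendsto_const_nhds).sub (hcont i)).norm).pow 2
  have hnj : Tendsto (fun x' => ‖y - f j x'‖ ^ 2) l (𝓝 (‖y - f j x‖ ^ 2)) :=
    (((tendsto_const_nhds).sub (hcont j)).norm).pow 2
  have hmax : Tendsto (fun x' => (max 0 (D - δ x')) ^ 2) l (𝓝 (D ^ 2)) := by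
    have h5 : Tendsto (fun x' => max 0 (D - δ x')) l (𝓝 (max 0 (D - 0))) :=
      (tendsto_const_nhds).max ((tendsto_const_nhds).sub hδ0)
    have h6 : max (0:ℝ) (D - 0) = D := by
      rw [sub_zero]; exact max_eq_right (norm_nonneg _)
    rw [h6] at h5
    exact h5.pow 2
  have hR : Tendsto (fun x' => (‖y - f i x'‖ ^ 2 - (max 0 (D - δ x')) ^ 2) +
      (‖y - f j x'‖ ^ 2 - (max 0 (D - δ x')) ^ 2)) l
      (𝓝 ((‖y - f i x‖ ^ 2 - D ^ 2) + (‖y - f j x‖ ^ 2 - D ^ 2))) :=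
    (hni.sub hmax).add (hnj.sub hmax)
  exact le_of_tendsto_of_tendsto hL hR hev

lemma lipOn_weaken {α β : Type*} [PseudoEMetricSpace α] [PseudoEMetricSpace β]
    {C C' : ℝ≥0} {g : α → β} {t : Set α} (h : LipschitzOnWith C g t) (hCC : C ≤ C') :
    LipschitzOnWith C' g t := fun x hx y hy =>
  le_trans (h hx hy) (mul_le_mul_left (ENNReal.coe_le_coe.mpr hCC) _)

lemma dist_ptYX {d m : ℕ} (y y' : Ys m) (x x' : Xs d) :
    dist (ptYX y x) (ptYX y' x') ^ 2 = ‖y - y'‖ ^ 2 + ‖x - x'‖ ^ 2 := by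
  have h : dist (ptYX y x) (ptYX y' x') = Real.sqrt (dist y y' ^ 2 + dist x x' ^ 2) :=
    WithLp.prod_dist_eq_of_L2 _ _
  rw [h, Real.sq_sqrt (by positivity), dist_eq_norm, dist_eq_norm]

/-- For every `R > 0` and `s > 0`, the safe-set profiles are finite:
the sets defining `H₁(R, s)` and `H₂(R, s)` are bounded above. -/
theorem statement9 {d m n : ℕ}
    (K : Set (Xs d)) (hK : IsBounded K)
    (f : Fin n → Xs d → Ys m) (hf : ∀ i, LocLipOn K (f i))
    (hext : IsLimitExtension K f)
    (P : Ys m → Xs d → Ys m) (hP : IsPrioritySelector f P) :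
    ∀ R : ℝ, 0 < R → ∀ s : ℝ, 0 < s →
      BddAbove (H1set K f P R s) ∧ BddAbove (H2set K f P R s) := by
  intro R hR s hs
  rcases Nat.eq_zero_or_pos n with hn0 | hn0
  · obtain ⟨i, -⟩ := hP 0 0
    exact absurd i.isLt (by omega)
  haveI : Nonempty (Fin n) := ⟨⟨0, hn0⟩⟩
  by_cases hs1 : 1 ≤ s
  · -- safe tube is empty
    have hempty : ∀ y x, (y, x) ∈ STube K f R s → False := by
      intro y x hmem
      have h1 := hmem.2.2
      have hρ : 0 ≤ rhoB K f y x := Metric.infDist_nonneg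
      have : omegaB K f y x < 1 := by
        rw [omegaB, div_lt_one (by linarith)]; linarith
      linarith
    constructor
    · exact ⟨0, by rintro r ⟨y, x, z, hx, hz, hxz, rfl⟩; exact (hempty y x hx).elim⟩
    · exact ⟨0, by rintro r ⟨y, x, hx, rfl⟩; exact (hempty y x hx).elim⟩
  push_neg at hs1
  set c := s / (1 - s) with hc0
  have hc : 0 < c := div_pos hs (by linarith)
  -- on the tube, distance to the bad set is at least c
  have hrho : ∀ y x, (y, x) ∈ STube K f R s → ∀ p ∈ BadSet K f, c ≤ dist (ptYX y x) p := by
    intro y x hmem p hp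
    have hω := hmem.2.2
    have hρ0 : 0 ≤ rhoB K f y x := Metric.infDist_nonneg
    have h1ρ : (0:ℝ) < 1 + rhoB K f y x := by linarith
    have hs' : s * (1 + rhoB K f y x) ≤ rhoB K f y x := by
      rw [omegaB, le_div_iff₀ h1ρ] at hω; linarith
    have hcρ : c ≤ rhoB K f y x := by
      rw [hc0, div_le_iff₀ (by linarith : (0:ℝ) < 1 - s)]; nlinarith
    exact le_trans hcρ (Metric.infDist_le_dist_of_mem hp)
  -- bad set membership facts
  have hDbad : ∀ (y' : Ys m) (x' : Xs d), x' ∈ DSet K f → ptYX y' x' ∈ BadSet K f := by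
    intro y' x' hx'
    left
    show projX (ptYX y' x') ∈ _
    simp only [projX, ptYX, Equiv.apply_symm_apply]
    exact Or.inl hx'
  have hSbad : ∀ (y' : Ys m) (x' : Xs d), x' ∈ K → y' ∈ Sigma0 f x' →
      ptYX y' x' ∈ BadSet K f := by
    intro y' x' hK' hy'
    right
    show projY (ptYX y' x') ∈ SigmaTilde K f (projX (ptYX y' x'))
    simp only [projY, projX, ptYX, Equiv.apply_symm_apply]
    exact subset_closure ⟨hK', hy'⟩
  -- the compact set T of base points far from the singular set
  set T : Set (Xs d) := {x' | x' ∈ closure K ∧ ∀ z ∈ DSet K f, c ≤ dist x' z} with hT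
  have hTsub : T ⊆ closure K := fun x' h => h.1
  have hTtube : ∀ y x, (y, x) ∈ STube K f R s → x ∈ T := by
    intro y x hmem
    refine ⟨hmem.1, fun z hz => ?_⟩
    have h1 := hrho y x hmem _ (hDbad y z hz)
    have h2 := dist_ptYX y y x z
    have h0 : ‖y - y‖ = 0 := by simp
    rw [dist_eq_norm]
    nlinarith [dist_nonneg (x := ptYX y x) (y := ptYX y z), norm_nonneg (x - z)]
  have hTne_D : ∀ x' ∈ T, x' ∉ DSet K f := by
    intro x' h hD
    have := h.2 x' hD
    simp at this
    linarith
  have hTclosed : IsClosed T := by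
    have hTeq : T = closure K ∩ ⋂ z ∈ DSet K f, {x' | c ≤ dist x' z} := by
      ext x'
      simp only [hT, mem_setOf_eq, mem_inter_iff, mem_iInter]
    rw [hTeq]
    refine isClosed_closure.inter (isClosed_biInter fun z _ => ?_)
    exact isClosed_le continuous_const (by fun_prop)
  have hTcomp : IsCompact T :=
    Metric.isCompact_of_isClosed_isBounded hTclosed (hK.closure.subset hTsub)
  -- uniform local Lipschitz data
  have hloc : ∀ x₀ : Xs d, ∃ ε : ℝ, 0 < ε ∧ ∃ L : ℝ≥0,
      (x₀ ∈ T → ∀ k, LipschitzOnWith L (f k) (Metric.ball x₀ (2 * ε) ∩ closure K)) := by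
    intro x₀
    by_cases hx₀ : x₀ ∈ T
    · have hnotD := hTne_D x₀ hx₀
      have hcl : x₀ ∈ closure K := hx₀.1
      have hlip : ∀ k : Fin n, ∃ C : ℝ≥0, ∃ t ∈ 𝓝[closure K] x₀,
          LipschitzOnWith C (f k) t := by
        intro k
        by_contra hcon
        exact hnotD ⟨hcl, k, hcon⟩
      choose Cc tt htt hlipC using hlip
      have hU : ∀ k : Fin n, ∃ U : Set (Xs d), IsOpen U ∧ x₀ ∈ U ∧ U ∩ closure K ⊆ tt k := by
        intro k
        rcases mem_nhdsWithin.mp (htt k) with ⟨U, hUo, hxU, hUsub⟩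
        exact ⟨U, hUo, hxU, hUsub⟩
      choose U hUo hxU hUsub using hU
      have hW : IsOpen (⋂ k, U k) := isOpen_iInter_of_finite hUo
      have hxW : x₀ ∈ ⋂ k, U k := mem_iInter.mpr hxU
      rcases Metric.isOpen_iff.mp hW x₀ hxW with ⟨ε, hε, hball⟩
      refine ⟨ε / 2, by linarith, Finset.univ.sup Cc, fun _ k => ?_⟩
      have hsub2 : Metric.ball x₀ (2 * (ε / 2)) ∩ closure K ⊆ tt k := by
        intro z hz
        apply hUsub k
        refine ⟨mem_iInter.mp (hball ?_) k, hz.2⟩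
        have := hz.1
        rwa [show 2 * (ε / 2) = ε by ring] at this
      exact lipOn_weaken ((hlipC k).mono hsub2) (Finset.le_sup (Finset.mem_univ k))
    · exact ⟨1, one_pos, 0, fun h => absurd h hx₀⟩
  choose ε hεpos Lf hLf using hloc
  obtain ⟨F, hFT, hFcov⟩ := hTcomp.elim_nhds_subcover (fun x₀ => Metric.ball x₀ (ε x₀))
    (fun x₀ _ => Metric.ball_mem_nhds _ (hεpos x₀))
  rcases F.eq_empty_or_nonempty with hFe | hFne
  · -- T is empty, hence so is the tube
    have hTe : ∀ x', x' ∉ T := by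
      intro x' hx'
      have := hFcov hx'
      rw [hFe] at this
      simpa using this
    constructor
    · exact ⟨0, by rintro r ⟨y, x, z, hx, hz, hxz, rfl⟩; exact (hTe x (hTtube y x hx)).elim⟩
    · exact ⟨0, by rintro r ⟨y, x, hx, rfl⟩; exact (hTe x (hTtube y x hx)).elim⟩
  set r := F.inf' hFne ε with hr0
  have hrpos : 0 < r := by
    rw [hr0, Finset.lt_inf'_iff]
    exact fun b _ => hεpos b
  set Lb : ℝ≥0 := F.sup Lf with hLb0
  -- uniform Lipschitz bound near T
  have hLip : ∀ (k : Fin n) (p : Xs d), p ∈ T → ∀ q ∈ closure K, dist p q ≤ r →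
      dist (f k p) (f k q) ≤ (Lb:ℝ) * dist p q := by
    intro k p hp q hq hpq
    obtain ⟨aF, haF, hpa⟩ : ∃ aF ∈ F, p ∈ Metric.ball aF (ε aF) := by
      have := hFcov hp
      simpa [mem_iUnion₂] using this
    have hra : r ≤ ε aF := Finset.inf'_le _ haF
    have hqa : q ∈ Metric.ball aF (2 * ε aF) := by
      rw [Metric.mem_ball] at hpa ⊢
      have htr : dist q aF ≤ dist q p + dist p aF := dist_triangle _ _ _
      rw [dist_comm q p] at htr
      linarith
    have hpa2 : p ∈ Metric.ball aF (2 * ε aF) := by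
      rw [Metric.mem_ball] at hpa ⊢
      linarith [hεpos aF]
    have hlip := hLf aF (hFT aF haF) k
    have hd := hlip.dist_le_mul p ⟨hpa2, hTsub hp⟩ q ⟨hqa, hq⟩
    have hcoe : ((Lf aF : ℝ≥0) : ℝ) ≤ (Lb : ℝ) := NNReal.coe_le_coe.mpr (Finset.le_sup haF)
    calc dist (f k p) (f k q) ≤ (Lf aF : ℝ) * dist p q := hd
      _ ≤ (Lb:ℝ) * dist p q := mul_le_mul_of_nonneg_right hcoe dist_nonneg
  -- continuity at points of T
  have hcontCl : ∀ (k : Fin n), ∀ x₀ ∈ T, Tendsto (f k) (𝓝[closure K] x₀) (𝓝 (f k x₀)) := by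
    intro k x₀ hx₀
    rw [Metric.tendsto_nhdsWithin_nhds]
    intro ε' hε'
    have hLb1 : (0:ℝ) < (Lb:ℝ) + 1 := by positivity
    refine ⟨min r (ε' / ((Lb:ℝ) + 1)), lt_min hrpos (by positivity), fun {x'} hx'K hd => ?_⟩
    have h1 : dist (f k x₀) (f k x') ≤ (Lb:ℝ) * dist x₀ x' :=
      hLip k x₀ hx₀ x' hx'K (by
        rw [dist_comm]
        exact le_of_lt (lt_of_lt_of_le hd (min_le_left _ _)))
    have h2 : dist x₀ x' < ε' / ((Lb:ℝ) + 1) := by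
      rw [dist_comm]
      exact lt_of_lt_of_le hd (min_le_right _ _)
    have h3 : (Lb:ℝ) * (ε' / ((Lb:ℝ) + 1)) < ε' := by
      have hfrac : (Lb:ℝ) / ((Lb:ℝ) + 1) < 1 := (div_lt_one hLb1).mpr (by linarith)
      calc (Lb:ℝ) * (ε' / ((Lb:ℝ) + 1)) = ε' * ((Lb:ℝ) / ((Lb:ℝ) + 1)) := by ring
        _ < ε' * 1 := mul_lt_mul_of_pos_left hfrac hε'
        _ = ε' := mul_one ε'
    have h4 : (Lb:ℝ) * dist x₀ x' ≤ (Lb:ℝ) * (ε' / ((Lb:ℝ) + 1)) :=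
      mul_le_mul_of_nonneg_left h2.le (Lb.coe_nonneg)
    rw [dist_comm (f k x') (f k x₀)]
    linarith
  have hcontT : ∀ (k : Fin n), ∀ x₀ ∈ T, Tendsto (f k) (𝓝[K] x₀) (𝓝 (f k x₀)) := by
    intro k x₀ hx₀
    exact (hcontCl k x₀ hx₀).mono_left (nhdsWithin_mono _ subset_closure)
  have hcontOnT : ∀ k : Fin n, ContinuousOn (f k) T := by
    intro k p hp
    exact (hcontCl k p hp).mono_left (nhdsWithin_mono _ hTsub)
  -- uniform bound on branch values over T
  have hMk : ∀ k : Fin n, ∃ Mk : ℝ, ∀ p ∈ T, ‖f k p‖ ≤ Mk :=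
    fun k => hTcomp.exists_bound_of_continuousOn (hcontOnT k)
  choose Ms hMs using hMk
  obtain ⟨M0, hM0⟩ := Finite.exists_le Ms
  set M := max M0 0 with hM
  have hMx : ∀ (k : Fin n) (p : Xs d), p ∈ T → ‖f k p‖ ≤ M :=
    fun k p hp => le_trans (hMs k p hp) (le_trans (hM0 k) (le_max_left _ _))
  have hM0' : (0:ℝ) ≤ M := le_max_right _ _
  -- distance to switching points
  have hSig : ∀ y x, (y, x) ∈ STube K f R s → ∀ x' ∈ K, ∀ y' ∈ Sigma0 f x',
      c ^ 2 ≤ ‖y' - y‖ ^ 2 + ‖x' - x‖ ^ 2 := by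
    intro y x hmem x' hx' y' hy'
    have h1 := hrho y x hmem _ (hSbad y' x' hx' hy')
    have h2 := dist_ptYX y y' x x'
    have h3 : c ^ 2 ≤ dist (ptYX y x) (ptYX y' x') ^ 2 := by
      nlinarith [dist_nonneg (x := ptYX y x) (y := ptYX y' x')]
    rw [h2] at h3
    calc c ^ 2 ≤ ‖y - y'‖ ^ 2 + ‖x - x'‖ ^ 2 := h3
      _ = ‖y' - y‖ ^ 2 + ‖x' - x‖ ^ 2 := by rw [norm_sub_rev, norm_sub_rev x]
  -- bound on the selector over the tube
  have hPbound : ∀ y x, (y, x) ∈ STube K f R s → ‖P y x‖ ≤ M := by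
    intro y x hmem
    obtain ⟨i, hPi, hi, -⟩ := hP y x
    rw [hPi]
    exact hMx i x (hTtube y x hmem)
  have hH2 : BddAbove (H2set K f P R s) := by
    refine ⟨M, ?_⟩
    rintro ρv ⟨y, x, hx, rfl⟩
    exact hPbound y x hx
  refine ⟨?_, hH2⟩
  set A2 : ℝ := 4 * (Lb:ℝ) * (R + M) + 4 * (Lb:ℝ) * (Lb:ℝ) * r with hA2
  set C2 : ℝ := A2 / (2 * c) + (Lb:ℝ) with hC2
  refine ⟨max (2 * M / r) C2, ?_⟩
  rintro ρv ⟨y, x, z, hx, hz, hxz, rfl⟩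
  have hxT := hTtube y x hx
  have hzT := hTtube y z hz
  obtain ⟨i, hPi, hi, -⟩ := hP y x
  obtain ⟨j, hPj, hj, -⟩ := hP y z
  have htpos : 0 < ‖x - z‖ := by
    rw [norm_pos_iff, sub_ne_zero]; exact hxz
  rcases le_or_gt r ‖x - z‖ with hfar | hnear
  · -- far apart: use the crude bound
    have h1 : ‖P y x - P y z‖ ≤ 2 * M := by
      calc ‖P y x - P y z‖ ≤ ‖P y x‖ + ‖P y z‖ := norm_sub_le _ _
        _ ≤ M + M := add_le_add (hPbound y x hx) (hPbound y z hz)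
        _ = 2 * M := by ring
    calc ‖P y x - P y z‖ / ‖x - z‖ ≤ (2 * M) / r :=
          div_le_div₀ (by linarith) h1 hrpos hfar
      _ ≤ max (2 * M / r) C2 := le_max_left _ _
  · -- nearby: use the switching bound
    rw [div_le_iff₀ htpos]
    have hdist : dist x z = ‖x - z‖ := dist_eq_norm _ _
    have hLk : ∀ k, ‖f k x - f k z‖ ≤ (Lb:ℝ) * ‖x - z‖ := by
      intro k
      have := hLip k x hxT z (hTsub hzT) (by rw [hdist]; exact hnear.le)
      rwa [dist_eq_norm, hdist] at this
    have hdj : ‖y - f j x‖ ≤ ‖y - f i x‖ + 2 * (Lb:ℝ) * ‖x - z‖ := by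
      have h1 : ‖y - f j x‖ ≤ ‖y - f j z‖ + ‖f j z - f j x‖ := by
        calc ‖y - f j x‖ = ‖(y - f j z) + (f j z - f j x)‖ := by rw [sub_add_sub_cancel]
          _ ≤ _ := norm_add_le _ _
      have h2 : ‖f j z - f j x‖ ≤ (Lb:ℝ) * ‖x - z‖ := by rw [norm_sub_rev]; exact hLk j
      have h3 : ‖y - f j z‖ ≤ ‖y - f i z‖ := hj i
      have h4 : ‖y - f i z‖ ≤ ‖y - f i x‖ + ‖f i x - f i z‖ := by
        calc ‖y - f i z‖ = ‖(y - f i x) + (f i x - f i z)‖ := by rw [sub_add_sub_cancel]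
          _ ≤ _ := norm_add_le _ _
      linarith [hLk i]
    have hC := pointC K f x (hTsub hxT) (fun k => hcontT k x hxT) y c hc
      (hSig y x hx) i hi i j
    have hdi : ‖y - f i x‖ ≤ R + M := by
      calc ‖y - f i x‖ ≤ ‖y‖ + ‖f i x‖ := norm_sub_le _ _
        _ ≤ R + M := add_le_add hx.2.1 (hMx i x hxT)
    have e1 : ‖y - f j x‖ ^ 2 ≤ (‖y - f i x‖ + 2 * (Lb:ℝ) * ‖x - z‖) ^ 2 :=
      pow_le_pow_left₀ (norm_nonneg _) hdj 2
    have hfij : ‖f i x - f j x‖ * (2 * c) ≤ ‖x - z‖ * A2 := by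
      rw [hA2]
      nlinarith [hC, e1, hdi, hnear.le, htpos.le, Lb.coe_nonneg,
        norm_nonneg (y - f i x), mul_nonneg Lb.coe_nonneg htpos.le,
        mul_nonneg (mul_nonneg Lb.coe_nonneg Lb.coe_nonneg) htpos.le]
    have hfij2 : ‖f i x - f j x‖ ≤ ‖x - z‖ * A2 / (2 * c) := by
      rw [le_div_iff₀ (by positivity)]
      linarith
    have hfin : ‖P y x - P y z‖ ≤ ‖f i x - f j x‖ + ‖f j x - f j z‖ := by
      rw [hPi, hPj]
      calc ‖f i x - f j z‖ = ‖(f i x - f j x) + (f j x - f j z)‖ := by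
            rw [sub_add_sub_cancel]
        _ ≤ _ := norm_add_le _ _
    calc ‖P y x - P y z‖ ≤ ‖x - z‖ * A2 / (2 * c) + (Lb:ℝ) * ‖x - z‖ := by
          linarith [hfin, hfij2, hLk j]
      _ = C2 * ‖x - z‖ := by rw [hC2]; ring
      _ ≤ max (2 * M / r) C2 * ‖x - z‖ :=
          mul_le_mul_of_nonneg_right (le_max_right _ _) htpos.le

end Bif
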